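/- For kp, γp > 0, the supremum of g(μ, σ²) = γp(μ - σ²)²/(kp μ σ²) over the set A = {(μ, σ²) : 0 < μ < σ² < (1 + kp/γp)μ} equals kp/(γp + kp), and this value lies in the open interval (0,1); the supremum is not attained on A. -/

import Mathlib

theorem stmt_16 (kp γp : ℝ) (hkp : 0 < kp) (hγp : 0 < γp)
    (A : Set (ℝ × ℝ))
    (hA : A = {p | 0 < p.1 ∧ p.1 < p.2 ∧ p.2 < (1 + kp / γp) * p.1})
    (g : ℝ × ℝ → ℝ)
    (hg : ∀ p : ℝ × ℝ, g p = γp * (p.1 - p.2) ^ 2 / (kp * p.1 * p.2)) :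
    IsLUB (g '' A) (kp / (γp + kp)) ∧
    kp / (γp + kp) ∈ Set.Ioo (0 : ℝ) 1 ∧
    kp / (γp + kp) ∉ g '' A := by
  have hsum : 0 < γp + kp := by linarith
  have hc : (1 : ℝ) < 1 + kp / γp := by
    have := div_pos hkp hγp; linarith
  -- strict upper bound
  have hub : ∀ p ∈ A, g p < kp / (γp + kp) := by
    intro p hp
    rw [hA] at hp
    obtain ⟨hμ, h1, h2⟩ := hp
    have hσ : 0 < p.2 := lt_trans hμ h1
    have h3 : γp * p.2 < γp * p.1 + kp * p.1 := by
      have h := mul_lt_mul_of_pos_left h2 hγp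
      have heq : γp * ((1 + kp / γp) * p.1) = γp * p.1 + kp * p.1 := by
        field_simp
      rw [heq] at h; exact h
    rw [hg]
    rw [div_lt_div_iff₀ (by positivity) hsum]
    nlinarith [mul_pos hkp (sub_pos.2 h1), sq_nonneg (p.2 - p.1),
      mul_lt_mul_of_pos_right h3 (sub_pos.2 h1),
      mul_self_lt_mul_self (by nlinarith : (0:ℝ) ≤ γp * (p.2 - p.1)) (by nlinarith : γp * (p.2 - p.1) < kp * p.1)]
  -- limit point
  have key : ∀ b ∈ upperBounds (g '' A), kp / (γp + kp) ≤ b := by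
    intro b hb
    set c := 1 + kp / γp with hcdef
    set f : ℝ → ℝ := fun t => γp * (1 - t) ^ 2 / (kp * 1 * t) with hf
    have hcpos : 0 < c := lt_trans one_pos hc
    have hfc : f c = kp / (γp + kp) := by
      rw [hf]
      simp only [hcdef]
      field_simp
      ring
    have hcont : ContinuousAt f c := by
      apply ContinuousAt.div
      · fun_prop
      · fun_prop
      · positivity
    have htend : Filter.Tendsto f (nhdsWithin c (Set.Iio c)) (nhds (kp / (γp + kp))) := by
      rw [← hfc]
      exact hcont.continuousWithinAt.tendsto
    refine le_of_tendsto htend ?_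
    filter_upwards [Ioo_mem_nhdsLT_of_mem (Set.mem_Ioc.2 ⟨hc, le_refl c⟩)] with t ht
    have hmem : ((1 : ℝ), t) ∈ A := by
      rw [hA]
      exact ⟨one_pos, ht.1, by simpa using ht.2⟩
    have : g (1, t) = f t := by rw [hg]
    exact this ▸ hb ⟨(1, t), hmem, rfl⟩
  refine ⟨⟨?_, key⟩, ⟨by positivity, by rw [div_lt_one hsum]; linarith⟩, ?_⟩
  · rintro x ⟨p, hp, rfl⟩
    exact (hub p hp).le
  · rintro ⟨p, hp, hgp⟩
    exact absurd hgp (ne_of_lt (hub p hp))
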